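/- Let (M, τ, h) be a Galilei manifold, v a unit timelike vector field, ∇ an affine connection, and h_v the covariant space metric with respect to v. Write Λ_μ^ν = ∇_μ v^ν and Q_ρ^{μν} = ∇_ρ h^{μν}. Then the covariant derivative of h_v is given by ∇_ρ h_{μν} = −2 Λ_{ρ(μ} τ_{ν)} − Q_{ρμν}, where indices are lowered with h_v. In particular, if ∇ is metric-compatible (∇τ=0, ∇h=0) and ∇v = 0, then ∇h_v = 0. -/

import Mathlib

/-- Partial derivative `∂_μ f` of a function on `ℝ^N` (coordinate chart). -/
noncomputable def pd {N : ℕ} (μ : Fin N) (f : (Fin N → ℝ) → ℝ) (x : Fin N → ℝ) : ℝ :=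
  fderiv ℝ f x (Pi.single μ 1)

/-- Covariant derivative `∇_μ τ_ν = ∂_μ τ_ν − Γ^λ_{μν} τ_λ` of a one-form, in coordinates. -/
noncomputable def covTau {N : ℕ} (Γ : (Fin N → ℝ) → Fin N → Fin N → Fin N → ℝ)
    (τ : (Fin N → ℝ) → Fin N → ℝ) (x : Fin N → ℝ) (μ ν : Fin N) : ℝ :=
  pd μ (fun y => τ y ν) x - ∑ l, Γ x l μ ν * τ x l

/-- Covariant derivative `∇_ρ v^κ = ∂_ρ v^κ + Γ^κ_{ρλ} v^λ` of a vector field. -/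
noncomputable def covVec {N : ℕ} (Γ : (Fin N → ℝ) → Fin N → Fin N → Fin N → ℝ)
    (v : (Fin N → ℝ) → Fin N → ℝ) (x : Fin N → ℝ) (ρ κ : Fin N) : ℝ :=
  pd ρ (fun y => v y κ) x + ∑ l, Γ x κ ρ l * v x l

/-- Covariant derivative `∇_ρ h^{μν}` of a contravariant 2-tensor. -/
noncomputable def covHup {N : ℕ} (Γ : (Fin N → ℝ) → Fin N → Fin N → Fin N → ℝ)
    (h : (Fin N → ℝ) → Fin N → Fin N → ℝ) (x : Fin N → ℝ) (ρ μ ν : Fin N) : ℝ :=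
  pd ρ (fun y => h y μ ν) x + (∑ l, Γ x μ ρ l * h x l ν) + ∑ l, Γ x ν ρ l * h x μ l

/-- Covariant derivative `∇_ρ h_{μν}` of a covariant 2-tensor. -/
noncomputable def covHdown {N : ℕ} (Γ : (Fin N → ℝ) → Fin N → Fin N → Fin N → ℝ)
    (hc : (Fin N → ℝ) → Fin N → Fin N → ℝ) (x : Fin N → ℝ) (ρ μ ν : Fin N) : ℝ :=
  pd ρ (fun y => hc y μ ν) x - (∑ l, Γ x l ρ μ * hc x l ν) - ∑ l, Γ x l ρ ν * hc x μ l

theorem pd_sum {N m : ℕ} (μ : Fin N) (f : Fin m → (Fin N → ℝ) → ℝ) (x : Fin N → ℝ)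
    (hf : ∀ κ, DifferentiableAt ℝ (f κ) x) :
    pd μ (fun y => ∑ κ, f κ y) x = ∑ κ, pd μ (f κ) x := by
  unfold pd
  rw [fderiv_fun_sum (fun i _ => hf i)]
  simp

theorem pd_mul {N : ℕ} (μ : Fin N) (f g : (Fin N → ℝ) → ℝ) (x : Fin N → ℝ)
    (hf : DifferentiableAt ℝ f x) (hg : DifferentiableAt ℝ g x) :
    pd μ (fun y => f y * g y) x = pd μ f x * g x + f x * pd μ g x := by
  unfold pd
  rw [fderiv_fun_mul hf hg]
  simp
  ring

theorem pd_const {N : ℕ} (μ : Fin N) (c : ℝ) (x : Fin N → ℝ) :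
    pd μ (fun _ => c) x = 0 := by
  simp [pd]

theorem pd_const_sub {N : ℕ} (μ : Fin N) (c : ℝ) (g : (Fin N → ℝ) → ℝ) (x : Fin N → ℝ)
    (hg : DifferentiableAt ℝ g x) :
    pd μ (fun y => c - g y) x = -pd μ g x := by
  unfold pd
  rw [show (fun y => c - g y) = (fun y => (fun _ => c) y - g y) from rfl,
    fderiv_fun_sub (differentiableAt_const c) hg]
  simp


theorem key_alg {N : ℕ} (A H dA dH : Fin N → Fin N → ℝ) (T V dT dv : Fin N → ℝ)
    (G : Fin N → Fin N → ℝ)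
    (hHs : ∀ μ ν, H μ ν = H ν μ)
    (hAV : ∀ μ, ∑ κ, A μ κ * V κ = 0)
    (hAH : ∀ μ ν, ∑ κ, A μ κ * H κ ν = (if μ = ν then (1:ℝ) else 0) - T μ * V ν)
    (hDa : ∀ μ, ∑ κ, (dA μ κ * V κ + A μ κ * dv κ) = 0)
    (hDb : ∀ μ ν, ∑ κ, (dA μ κ * H κ ν + A μ κ * dH κ ν) = -(dT μ * V ν + T μ * dv ν))
    (μ ν : Fin N) :
    dA μ ν - (∑ l, G l μ * A l ν) - (∑ l, G l ν * A μ l)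
      = -((∑ κ, (dv κ + ∑ l, G κ l * V l) * A μ κ) * T ν
            + (∑ κ, (dv κ + ∑ l, G κ l * V l) * A ν κ) * T μ)
        - ∑ κ, ∑ l, (dH κ l + (∑ m, G κ m * H m l) + ∑ m, G l m * H κ m) * A μ κ * A ν l := by
  classical
  set Λ : Fin N → ℝ := fun κ => dv κ + ∑ l, G κ l * V l with hΛ
  set D : Fin N → Fin N → ℝ :=
    fun μ ν => dA μ ν - (∑ l, G l μ * A l ν) - (∑ l, G l ν * A μ l) with hD
  set Q : Fin N → Fin N → ℝ :=
    fun κ l => dH κ l + (∑ m, G κ m * H m l) + ∑ m, G l m * H κ m with hQ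
  -- (I)  ∑ D μ κ V κ = - ∑ A μ κ Λ κ
  have I : ∀ μ, ∑ κ, D μ κ * V κ = -∑ κ, A μ κ * Λ κ := by
    intro μ
    have e1 : ∑ κ, (∑ l, G l μ * A l κ) * V κ = 0 := by
      have : ∑ κ, (∑ l, G l μ * A l κ) * V κ = ∑ l, G l μ * ∑ κ, A l κ * V κ := by
        simp only [Finset.sum_mul, Finset.mul_sum]
        rw [Finset.sum_comm]
        exact Finset.sum_congr rfl fun l _ => Finset.sum_congr rfl fun κ _ => by ring
      rw [this]; simp [hAV]
    have e2 : ∑ κ, (∑ l, G l κ * A μ l) * V κ = ∑ κ, A μ κ * ∑ l, G κ l * V l := by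
      simp only [Finset.sum_mul, Finset.mul_sum]
      rw [Finset.sum_comm]
      exact Finset.sum_congr rfl fun l _ => Finset.sum_congr rfl fun κ _ => by ring
    have e3 : ∑ κ, dA μ κ * V κ + ∑ κ, A μ κ * dv κ = 0 := by
      rw [← Finset.sum_add_distrib]; exact hDa μ
    simp only [hD, hΛ, sub_mul, Finset.sum_sub_distrib, mul_add, Finset.sum_add_distrib, e1, e2]
    linarith [e3]
  -- (II)  ∑ (D μ κ H κ ν + A μ κ Q κ ν) = -((dT μ - ∑ G l μ T l) V ν + T μ Λ ν)
  have II : ∀ μ ν, ∑ κ, (D μ κ * H κ ν + A μ κ * Q κ ν)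
      = -((dT μ - ∑ l, G l μ * T l) * V ν + T μ * Λ ν) := by
    intro μ ν
    have p1 : ∑ κ, dA μ κ * H κ ν + ∑ κ, A μ κ * dH κ ν = -(dT μ * V ν + T μ * dv ν) := by
      rw [← Finset.sum_add_distrib]; exact hDb μ ν
    have p2 : ∑ κ, (∑ l, G l μ * A l κ) * H κ ν
        = G ν μ - (∑ l, G l μ * T l) * V ν := by
      have : ∑ κ, (∑ l, G l μ * A l κ) * H κ ν = ∑ l, G l μ * ∑ κ, A l κ * H κ ν := by
        simp only [Finset.sum_mul, Finset.mul_sum]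
        rw [Finset.sum_comm]
        exact Finset.sum_congr rfl fun l _ => Finset.sum_congr rfl fun κ _ => by ring
      rw [this]
      simp only [hAH, mul_sub, Finset.sum_sub_distrib, mul_ite, mul_one, mul_zero]
      rw [Finset.sum_ite_eq' Finset.univ ν (fun l => G l μ)]
      simp [Finset.sum_mul, mul_assoc]
    have p3 : ∑ κ, (∑ l, G l κ * A μ l) * H κ ν
        = ∑ κ, A μ κ * ∑ m, G κ m * H m ν := by
      simp only [Finset.sum_mul, Finset.mul_sum]
      rw [Finset.sum_comm]
      exact Finset.sum_congr rfl fun l _ => Finset.sum_congr rfl fun κ _ => by ring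
    have p4 : ∑ κ, A μ κ * ∑ m, G ν m * H κ m
        = G ν μ - T μ * ∑ m, G ν m * V m := by
      have : ∑ κ, A μ κ * ∑ m, G ν m * H κ m = ∑ m, G ν m * ∑ κ, A μ κ * H κ m := by
        simp only [Finset.mul_sum]
        rw [Finset.sum_comm]
        exact Finset.sum_congr rfl fun l _ => Finset.sum_congr rfl fun κ _ => by ring
      rw [this]
      simp only [hAH, mul_sub, Finset.sum_sub_distrib, mul_ite, mul_one, mul_zero]
      rw [Finset.sum_ite_eq Finset.univ μ (fun m => G ν m)]
      have e4 : ∑ m, G ν m * (T μ * V m) = T μ * ∑ m, G ν m * V m := by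
        rw [Finset.mul_sum]; exact Finset.sum_congr rfl fun m _ => by ring
      rw [e4]; simp
    have expand : ∑ κ, (D μ κ * H κ ν + A μ κ * Q κ ν)
        = (∑ κ, dA μ κ * H κ ν + ∑ κ, A μ κ * dH κ ν)
          - ∑ κ, (∑ l, G l μ * A l κ) * H κ ν
          - ∑ κ, (∑ l, G l κ * A μ l) * H κ ν
          + ∑ κ, A μ κ * ∑ m, G κ m * H m ν
          + ∑ κ, A μ κ * ∑ m, G ν m * H κ m := by
      simp only [hD, hQ, sub_mul, mul_add, Finset.sum_add_distrib, Finset.sum_sub_distrib]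
      ring
    rw [expand, p1, p2, p3, p4, hΛ]
    ring
  -- final contraction with A ν ·
  have IIc := fun σ => II μ σ
  have main : ∑ σ, (∑ κ, (D μ κ * H κ σ + A μ κ * Q κ σ)) * A ν σ
      = - T μ * ∑ σ, Λ σ * A ν σ := by
    have : ∀ σ, (∑ κ, (D μ κ * H κ σ + A μ κ * Q κ σ)) * A ν σ
        = -((dT μ - ∑ l, G l μ * T l) * (A ν σ * V σ) + T μ * (Λ σ * A ν σ)) := by
      intro σ; rw [IIc σ]; ring
    rw [Finset.sum_congr rfl fun σ _ => this σ]
    simp only [neg_add, Finset.sum_add_distrib, Finset.sum_neg_distrib]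
    rw [← Finset.mul_sum, ← Finset.mul_sum, hAV ν]
    ring
  -- split LHS of main
  have split : ∑ σ, (∑ κ, (D μ κ * H κ σ + A μ κ * Q κ σ)) * A ν σ
      = ∑ κ, D μ κ * ∑ σ, H κ σ * A ν σ + ∑ σ, (∑ κ, A μ κ * Q κ σ) * A ν σ := by
    simp only [Finset.sum_mul, add_mul, Finset.sum_add_distrib, Finset.mul_sum]
    congr 1
    rw [Finset.sum_comm]
    exact Finset.sum_congr rfl fun κ _ => Finset.sum_congr rfl fun σ _ => by ring
  have contr : ∑ κ, D μ κ * ∑ σ, H κ σ * A ν σ = D μ ν + T ν * ∑ κ, A μ κ * Λ κ := by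
    have e : ∀ κ, ∑ σ, H κ σ * A ν σ = (if ν = κ then (1:ℝ) else 0) - T ν * V κ := by
      intro κ
      rw [show ∑ σ, H κ σ * A ν σ = ∑ σ, A ν σ * H σ κ from
        Finset.sum_congr rfl fun σ _ => by rw [hHs κ σ]; ring]
      exact hAH ν κ
    rw [Finset.sum_congr rfl fun κ _ => by rw [e κ]]
    simp only [mul_sub, mul_ite, mul_one, mul_zero, Finset.sum_sub_distrib]
    rw [Finset.sum_ite_eq Finset.univ ν (fun κ => D μ κ)]
    have : ∑ κ, D μ κ * (T ν * V κ) = T ν * ∑ κ, D μ κ * V κ := by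
      rw [Finset.mul_sum]; exact Finset.sum_congr rfl fun κ _ => by ring
    rw [this, I μ]
    simp
  -- conclude
  have final := main
  rw [split, contr] at final
  have goal1 : D μ ν = -((∑ κ, Λ κ * A μ κ) * T ν + (∑ κ, Λ κ * A ν κ) * T μ)
      - ∑ κ, ∑ l, Q κ l * A μ κ * A ν l := by
    have swap : ∑ σ, (∑ κ, A μ κ * Q κ σ) * A ν σ = ∑ κ, ∑ l, Q κ l * A μ κ * A ν l := by
      simp only [Finset.sum_mul]
      rw [Finset.sum_comm]
      exact Finset.sum_congr rfl fun κ _ => Finset.sum_congr rfl fun σ _ => by ring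
    have c1 : ∑ κ, A μ κ * Λ κ = ∑ κ, Λ κ * A μ κ :=
      Finset.sum_congr rfl fun κ _ => by ring
    have c2 : ∑ σ, Λ σ * A ν σ = ∑ κ, Λ κ * A ν κ := rfl
    rw [swap] at final
    rw [← c1] at *
    linarith [final, c1]
  simpa [hD, hΛ, hQ] using goal1

/-- On a Galilei manifold (in local coordinates on a chart), for any affine
connection with coefficients `Γ`, writing `Λ_μ^ν = ∇_μ v^ν` and `Q_ρ^{μν} = ∇_ρ h^{μν}`, the
covariant derivative of the covariant space metric `h_v` is
`∇_ρ h_{μν} = −2 Λ_{ρ(μ} τ_{ν)} − Q_{ρμν}` (indices lowered with `h_v`); in particular if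
`∇τ = 0`, `∇h = 0` and `∇v = 0` then `∇h_v = 0`. -/
theorem covariant_derivative_of_space_metric (n : ℕ)
    (τ : (Fin (n + 1) → ℝ) → Fin (n + 1) → ℝ)
    (h hc : (Fin (n + 1) → ℝ) → Fin (n + 1) → Fin (n + 1) → ℝ)
    (v : (Fin (n + 1) → ℝ) → Fin (n + 1) → ℝ)
    (Γ : (Fin (n + 1) → ℝ) → Fin (n + 1) → Fin (n + 1) → Fin (n + 1) → ℝ)
    (hτsm : ∀ ν, ContDiff ℝ (⊤ : ℕ∞) fun x => τ x ν)
    (hhsm : ∀ μ ν, ContDiff ℝ (⊤ : ℕ∞) fun x => h x μ ν)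
    (hhcsm : ∀ μ ν, ContDiff ℝ (⊤ : ℕ∞) fun x => hc x μ ν)
    (hvsm : ∀ μ, ContDiff ℝ (⊤ : ℕ∞) fun x => v x μ)
    (hsymm : ∀ x μ ν, h x μ ν = h x ν μ)
    (hcsymm : ∀ x μ ν, hc x μ ν = hc x ν μ)
    (hτh : ∀ x σ, ∑ ρ, τ x ρ * h x ρ σ = 0)
    (hτv : ∀ x, ∑ ρ, τ x ρ * v x ρ = 1)
    (hcv : ∀ x μ, ∑ ν, hc x μ ν * v x ν = 0)
    (hch : ∀ x μ ν, ∑ κ, hc x μ κ * h x κ ν = (if μ = ν then (1 : ℝ) else 0) - τ x μ * v x ν) :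
    (∀ x ρ μ ν, covHdown Γ hc x ρ μ ν =
      -((∑ κ, covVec Γ v x ρ κ * hc x μ κ) * τ x ν
          + (∑ κ, covVec Γ v x ρ κ * hc x ν κ) * τ x μ)
        - ∑ κ, ∑ l, covHup Γ h x ρ κ l * hc x μ κ * hc x ν l) ∧
    ((∀ x μ ν, covTau Γ τ x μ ν = 0) → (∀ x ρ μ ν, covHup Γ h x ρ μ ν = 0) →
      (∀ x ρ κ, covVec Γ v x ρ κ = 0) → ∀ x ρ μ ν, covHdown Γ hc x ρ μ ν = 0) := by

  have part1 : ∀ x ρ μ ν, covHdown Γ hc x ρ μ ν =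
      -((∑ κ, covVec Γ v x ρ κ * hc x μ κ) * τ x ν
          + (∑ κ, covVec Γ v x ρ κ * hc x ν κ) * τ x μ)
        - ∑ κ, ∑ l, covHup Γ h x ρ κ l * hc x μ κ * hc x ν l := by
    intro x ρ μ ν
    have dhc : ∀ μ ν, DifferentiableAt ℝ (fun y => hc y μ ν) x :=
      fun μ ν => ((hhcsm μ ν).differentiable (by simp)).differentiableAt
    have dh : ∀ μ ν, DifferentiableAt ℝ (fun y => h y μ ν) x :=
      fun μ ν => ((hhsm μ ν).differentiable (by simp)).differentiableAt
    have dτ : ∀ ν, DifferentiableAt ℝ (fun y => τ y ν) x :=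
      fun ν => ((hτsm ν).differentiable (by simp)).differentiableAt
    have dv : ∀ ν, DifferentiableAt ℝ (fun y => v y ν) x :=
      fun ν => ((hvsm ν).differentiable (by simp)).differentiableAt
    -- derivative of hc·v = 0
    have Da : ∀ μ, ∑ κ, (pd ρ (fun y => hc y μ κ) x * v x κ
        + hc x μ κ * pd ρ (fun y => v y κ) x) = 0 := by
      intro μ
      have h0 : (fun y => ∑ κ, hc y μ κ * v y κ) = fun _ => (0 : ℝ) :=
        funext fun y => hcv y μ
      have h1 : pd ρ (fun y => ∑ κ, hc y μ κ * v y κ) x = 0 := by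
        rw [h0, pd_const]
      rw [pd_sum ρ (fun κ y => hc y μ κ * v y κ) x
        (fun κ => (dhc μ κ).mul (dv κ))] at h1
      rw [← h1]
      exact Finset.sum_congr rfl fun κ _ =>
        (pd_mul ρ _ _ x (dhc μ κ) (dv κ)).symm
    -- derivative of hc·h = P
    have Db : ∀ μ ν, ∑ κ, (pd ρ (fun y => hc y μ κ) x * h x κ ν
        + hc x μ κ * pd ρ (fun y => h y κ ν) x)
        = -(pd ρ (fun y => τ y μ) x * v x ν + τ x μ * pd ρ (fun y => v y ν) x) := by
      intro μ ν
      have h0 : (fun y => ∑ κ, hc y μ κ * h y κ ν)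
          = fun y => (if μ = ν then (1:ℝ) else 0) - τ y μ * v y ν :=
        funext fun y => hch y μ ν
      have h1 : pd ρ (fun y => ∑ κ, hc y μ κ * h y κ ν) x
          = -pd ρ (fun y => τ y μ * v y ν) x := by
        rw [h0, pd_const_sub ρ _ (fun y => τ y μ * v y ν) x ((dτ μ).mul (dv ν))]
      rw [pd_sum ρ (fun κ y => hc y μ κ * h y κ ν) x
        (fun κ => (dhc μ κ).mul (dh κ ν))] at h1
      rw [pd_mul ρ _ _ x (dτ μ) (dv ν)] at h1
      rw [← h1]
      exact Finset.sum_congr rfl fun κ _ =>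
        (pd_mul ρ _ _ x (dhc μ κ) (dh κ ν)).symm
    have := key_alg (hc x) (h x) (fun μ ν => pd ρ (fun y => hc y μ ν) x)
      (fun μ ν => pd ρ (fun y => h y μ ν) x) (τ x) (v x)
      (fun μ => pd ρ (fun y => τ y μ) x) (fun μ => pd ρ (fun y => v y μ) x)
      (fun a b => Γ x a ρ b) (hsymm x) (hcv x) (hch x) Da Db μ ν
    simpa [covHdown, covVec, covHup] using this
  refine ⟨part1, fun hT hQ hV x ρ μ ν => ?_⟩
  rw [part1 x ρ μ ν]
  simp [hQ, hV]
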